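/- Let n ≥ 2 be an integer, let a > 0, and set b := (1 − 1/√n)·a. Then ∫_{K'} √(π_a(x) π_b(x)) dx = (∫_{K'} e^{−((a+b)/2)·x₀} dx) / √(Z(a) Z(b)) > 1/3. -/

import Mathlib

open MeasureTheory Set
open scoped ENNReal NNReal Pointwise

lemma ennreal_four_mul_le_sq (p q : ℝ≥0∞) : 4 * (p * q) ≤ (p + q) ^ 2 := by
  rcases eq_or_ne p ⊤ with rfl | hp
  · rcases eq_or_ne q 0 with rfl | hq
    · simp
    · rw [top_add, ENNReal.top_pow two_ne_zero]; exact le_top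
  rcases eq_or_ne q ⊤ with rfl | hq
  · rcases eq_or_ne p 0 with rfl | hp0
    · simp
    · rw [add_top, ENNReal.top_pow two_ne_zero]; exact le_top
  lift p to ℝ≥0 using hp
  lift q to ℝ≥0 using hq
  have h4 : (4 : ℝ≥0∞) = ((4 : ℝ≥0) : ℝ≥0∞) := by norm_cast
  rw [h4, ← ENNReal.coe_mul, ← ENNReal.coe_mul, ← ENNReal.coe_add, ← ENNReal.coe_pow,
    ENNReal.coe_le_coe, ← NNReal.coe_le_coe]
  push_cast
  nlinarith [sq_nonneg ((p : ℝ) - q)]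

lemma half_image_volume (c : ℝ) (S : Set ℝ) :
    volume ((fun x => x / 2 + c) '' S) = volume S / 2 := by
  have h : (fun x : ℝ => x / 2 + c) = fun x => AffineMap.homothety (2 * c) (1/2 : ℝ) x := by
    funext x
    simp [AffineMap.homothety_apply]
    ring
  rw [h]
  rw [show ((fun x : ℝ => AffineMap.homothety (2*c) (1/2:ℝ) x) '' S)
      = AffineMap.homothety (2*c) (1/2:ℝ) '' S from rfl]
  rw [Measure.addHaar_image_homothety]
  rw [Module.finrank_self]
  rw [pow_one]
  rw [abs_of_pos (by norm_num : (0:ℝ) < 1/2)]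
  rw [ENNReal.div_eq_inv_mul]
  congr 1
  rw [show ((1:ℝ)/2) = (2:ℝ)⁻¹ by norm_num]
  rw [ENNReal.ofReal_inv_of_pos (by norm_num : (0:ℝ) < 2)]
  simp

lemma midpoint_measure {A B C : Set ℝ} (hAm : MeasurableSet A) (hBm : MeasurableSet B)
    (hA : A.Nonempty) (hB : B.Nonempty)
    (H : ∀ x ∈ A, ∀ y ∈ B, (x + y) / 2 ∈ C) :
    volume A / 2 + volume B / 2 ≤ volume C := by
  -- the compact case
  have key : ∀ KA : Set ℝ, IsCompact KA → KA ⊆ A → ∀ KB : Set ℝ, IsCompact KB → KB ⊆ B →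
      volume KA / 2 + volume KB / 2 ≤ volume C := by
    intro KA hKA hKAA KB hKB hKBB
    rcases KA.eq_empty_or_nonempty with rfl | hKAne
    · simp only [measure_empty, ENNReal.zero_div, zero_add]
      obtain ⟨x, hx⟩ := hA
      have himg : (fun y => y / 2 + x / 2) '' KB ⊆ C := by
        rintro _ ⟨y, hy, rfl⟩
        have := H x hx y (hKBB hy)
        convert this using 1
        ring
      calc volume KB / 2 = volume ((fun y => y / 2 + x / 2) '' KB) :=
            (half_image_volume _ _).symm
        _ ≤ volume C := measure_mono himg
    rcases KB.eq_empty_or_nonempty with rfl | hKBne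
    · simp only [measure_empty, ENNReal.zero_div, add_zero]
      obtain ⟨y, hy⟩ := hB
      have himg : (fun x => x / 2 + y / 2) '' KA ⊆ C := by
        rintro _ ⟨x, hx, rfl⟩
        have := H x (hKAA hx) y hy
        convert this using 1
        ring
      calc volume KA / 2 = volume ((fun x => x / 2 + y / 2) '' KA) :=
            (half_image_volume _ _).symm
        _ ≤ volume C := measure_mono himg
    · set astar := sSup KA with hastar
      set bstar := sInf KB with hbstar
      have hamem : astar ∈ KA := hKA.sSup_mem hKAne
      have hbmem : bstar ∈ KB := hKB.sInf_mem hKBne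
      set X := (fun x => x / 2 + bstar / 2) '' KA with hX
      set Y := (fun y => y / 2 + astar / 2) '' KB with hY
      have hXC : X ⊆ C := by
        rintro _ ⟨x, hx, rfl⟩
        have := H x (hKAA hx) bstar (hKBB hbmem)
        convert this using 1; ring
      have hYC : Y ⊆ C := by
        rintro _ ⟨y, hy, rfl⟩
        have := H astar (hKAA hamem) y (hKBB hy)
        convert this using 1; ring
      have hXY : X ∩ Y ⊆ {(astar + bstar) / 2} := by
        rintro z ⟨⟨x, hx, rfl⟩, ⟨y, hy, hz⟩⟩
        have h1 : x ≤ astar := le_csSup hKA.bddAbove hx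
        have h2 : bstar ≤ y := csInf_le hKB.bddBelow hy
        simp only at hz
        have h3 : x / 2 + bstar / 2 = (astar + bstar) / 2 := by linarith
        simp [← hz, h3]
        linarith
      have hXYnull : volume (X ∩ Y) = 0 :=
        measure_mono_null hXY (measure_singleton _)
      have hYmeas : MeasurableSet Y :=
        ((hKB.image (by continuity)).isClosed).measurableSet
      have hsum : volume X + volume Y = volume (X ∪ Y) + volume (X ∩ Y) :=
        (measure_union_add_inter X hYmeas).symm
      have : volume X + volume Y ≤ volume C := by
        rw [hsum, hXYnull, add_zero]
        exact measure_mono (union_subset hXC hYC)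
      calc volume KA / 2 + volume KB / 2
          = volume X + volume Y := by
            rw [hX, hY, half_image_volume, half_image_volume]
        _ ≤ volume C := this
  -- inner regularity
  have hAr : volume A / 2 = ⨆ (K : Set ℝ) (_ : K ⊆ A ∧ IsCompact K), volume K / 2 := by
    rw [hAm.measure_eq_iSup_isCompact]
    simp_rw [ENNReal.iSup_div, iSup_and]
  have hBr : volume B / 2 = ⨆ (K : Set ℝ) (_ : K ⊆ B ∧ IsCompact K), volume K / 2 := by
    rw [hBm.measure_eq_iSup_isCompact]
    simp_rw [ENNReal.iSup_div, iSup_and]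
  rw [hAr, hBr]
  exact ENNReal.biSup_add_biSup_le' ⟨∅, empty_subset _, isCompact_empty⟩
    ⟨∅, empty_subset _, isCompact_empty⟩
    (fun K hK L hL => key K hK.2 hK.1 L hL.2 hL.1)

lemma lintegral_Ioi_scale {c : ℝ} (hc : 0 < c) {k : ℝ → ℝ≥0∞} (mk : Measurable k) :
    ∫⁻ u in Ioi (0:ℝ), k u = ENNReal.ofReal c * ∫⁻ t in Ioi (0:ℝ), k (c * t) := by
  have hmap : Measure.map (c * ·) volume = ENNReal.ofReal |c⁻¹| • volume :=
    Real.map_volume_mul_left (ne_of_gt hc)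
  have hpre : (c * ·) ⁻¹' Ioi (0:ℝ) = Ioi 0 := by
    ext t
    simp only [mem_preimage, mem_Ioi]
    constructor
    · intro ht; nlinarith
    · intro ht; positivity
  have h1 : ∫⁻ u in Ioi (0:ℝ), k u ∂(Measure.map (c * ·) volume)
      = ∫⁻ t in Ioi (0:ℝ), k (c * t) := by
    rw [setLIntegral_map measurableSet_Ioi mk (measurable_const_mul c), hpre]
  rw [hmap] at h1
  rw [Measure.restrict_smul, lintegral_smul_measure, smul_eq_mul] at h1
  rw [← h1, ← mul_assoc, ← ENNReal.ofReal_mul (le_of_lt hc),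
    abs_of_pos (inv_pos.mpr hc), mul_inv_cancel₀ (ne_of_gt hc), ENNReal.ofReal_one, one_mul]

lemma dim1_PL {f g h : ℝ → ℝ} {Mf Mg : ℝ}
    (mf : Measurable f) (mg : Measurable g) (mh : Measurable h)
    (f0 : ∀ x, 0 ≤ f x) (g0 : ∀ x, 0 ≤ g x) (h0 : ∀ x, 0 ≤ h x)
    (fM : ∀ x, f x ≤ Mf) (gM : ∀ x, g x ≤ Mg)
    (intf : Integrable f) (intg : Integrable g) (inth : Integrable h)
    (H : ∀ x y, Real.sqrt (f x * g y) ≤ h ((x + y) / 2)) :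
    Real.sqrt ((∫ x, f x) * (∫ y, g y)) ≤ ∫ z, h z := by
  have hinth0 : 0 ≤ ∫ z, h z := integral_nonneg h0
  have hintf0 : 0 ≤ ∫ z, f z := integral_nonneg f0
  have hintg0 : 0 ≤ ∫ z, g z := integral_nonneg g0
  -- reduce to squares
  suffices hsq : (∫ x, f x) * (∫ y, g y) ≤ (∫ z, h z) ^ 2 by
    calc Real.sqrt ((∫ x, f x) * (∫ y, g y)) ≤ Real.sqrt ((∫ z, h z) ^ 2) :=
          Real.sqrt_le_sqrt hsq
      _ = ∫ z, h z := Real.sqrt_sq hinth0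
  -- move to lintegrals
  set X := ∫⁻ x, ENNReal.ofReal (f x) with hXdef
  set Y := ∫⁻ y, ENNReal.ofReal (g y) with hYdef
  set Zh := ∫⁻ z, ENNReal.ofReal (h z) with hZdef
  have hX : ENNReal.ofReal (∫ x, f x) = X :=
    ofReal_integral_eq_lintegral_ofReal intf (ae_of_all _ f0)
  have hY : ENNReal.ofReal (∫ y, g y) = Y :=
    ofReal_integral_eq_lintegral_ofReal intg (ae_of_all _ g0)
  have hZ : ENNReal.ofReal (∫ z, h z) = Zh :=
    ofReal_integral_eq_lintegral_ofReal inth (ae_of_all _ h0)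
  suffices hENN : X * Y ≤ Zh ^ 2 by
    rw [← ENNReal.ofReal_le_ofReal_iff (sq_nonneg _), ENNReal.ofReal_mul hintf0,
      ENNReal.ofReal_pow hinth0, hX, hY, hZ]
    exact hENN
  rcases eq_or_ne X 0 with hX0 | hX0
  · simp [hX0]
  rcases eq_or_ne Y 0 with hY0 | hY0
  · simp [hY0]
  -- essential sups
  set F : ℝ≥0∞ := essSup (fun x => ENNReal.ofReal (f x)) volume with hFdef
  set G : ℝ≥0∞ := essSup (fun y => ENNReal.ofReal (g y)) volume with hGdef
  have hFle : F ≤ ENNReal.ofReal Mf :=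
    essSup_le_of_ae_le _ (ae_of_all _ fun x => ENNReal.ofReal_le_ofReal (fM x))
  have hGle : G ≤ ENNReal.ofReal Mg :=
    essSup_le_of_ae_le _ (ae_of_all _ fun x => ENNReal.ofReal_le_ofReal (gM x))
  have hFtop : F ≠ ⊤ := (lt_of_le_of_lt hFle ENNReal.ofReal_lt_top).ne
  have hGtop : G ≠ ⊤ := (lt_of_le_of_lt hGle ENNReal.ofReal_lt_top).ne
  have hF0 : F ≠ 0 := by
    intro h0'
    apply hX0
    have : X ≤ ∫⁻ _ : ℝ, (0:ℝ≥0∞) := by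
      refine lintegral_mono_ae ?_
      filter_upwards [ENNReal.ae_le_essSup (fun x => ENNReal.ofReal (f x))] with x hx
      rw [← hFdef, h0'] at hx
      simpa using hx
    simpa using this
  have hG0 : G ≠ 0 := by
    intro h0'
    apply hY0
    have : Y ≤ ∫⁻ _ : ℝ, (0:ℝ≥0∞) := by
      refine lintegral_mono_ae ?_
      filter_upwards [ENNReal.ae_le_essSup (fun y => ENNReal.ofReal (g y))] with y hy
      rw [← hGdef, h0'] at hy
      simpa using hy
    simpa using this
  set F' := F.toReal with hF'def
  set G' := G.toReal with hG'def
  have hF'pos : 0 < F' := ENNReal.toReal_pos hF0 hFtop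
  have hG'pos : 0 < G' := ENNReal.toReal_pos hG0 hGtop
  have hFeq : F = ENNReal.ofReal F' := (ENNReal.ofReal_toReal hFtop).symm
  have hGeq : G = ENNReal.ofReal G' := (ENNReal.ofReal_toReal hGtop).symm
  -- a.e. bounds by essSup
  have hfae : ∀ᵐ x, f x ≤ F' := by
    filter_upwards [ENNReal.ae_le_essSup (fun x => ENNReal.ofReal (f x))] with x hx
    rw [← hFdef, hFeq, ENNReal.ofReal_le_ofReal_iff (le_of_lt hF'pos)] at hx
    exact hx
  have hgae : ∀ᵐ y, g y ≤ G' := by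
    filter_upwards [ENNReal.ae_le_essSup (fun y => ENNReal.ofReal (g y))] with y hy
    rw [← hGdef, hGeq, ENNReal.ofReal_le_ofReal_iff (le_of_lt hG'pos)] at hy
    exact hy
  -- vanishing of superlevel sets above the essSup
  have hfvan : ∀ t : ℝ, F' ≤ t → volume {x | t < f x} = 0 := by
    intro t ht
    have : {x | t < f x} ⊆ {x | ¬ f x ≤ F'} := fun x hx => by
      simp only [mem_setOf_eq] at hx ⊢
      push_neg
      linarith
    exact measure_mono_null this (ae_iff.mp hfae)
  have hgvan : ∀ t : ℝ, G' ≤ t → volume {y | t < g y} = 0 := by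
    intro t ht
    have : {y | t < g y} ⊆ {y | ¬ g y ≤ G'} := fun y hy => by
      simp only [mem_setOf_eq] at hy ⊢
      push_neg
      linarith
    exact measure_mono_null this (ae_iff.mp hgae)
  -- positivity of superlevel sets below the essSup
  have hfpos : ∀ t : ℝ, t ∈ Ioo (0:ℝ) 1 → 0 < volume {x | F' * t < f x} := by
    intro t ht
    rcases eq_or_ne (volume {x | F' * t < f x}) 0 with h0' | h0'
    · exfalso
      have hae : ∀ᵐ x, f x ≤ F' * t := by
        rw [ae_iff]
        convert h0' using 2
        ext x; simp [not_le]
      have : F ≤ ENNReal.ofReal (F' * t) :=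
        essSup_le_of_ae_le _ (hae.mono fun x hx => ENNReal.ofReal_le_ofReal hx)
      rw [hFeq, ENNReal.ofReal_le_ofReal_iff (mul_nonneg hF'pos.le ht.1.le)] at this
      nlinarith [ht.1, ht.2]
    · exact h0'.bot_lt
  have hgpos : ∀ t : ℝ, t ∈ Ioo (0:ℝ) 1 → 0 < volume {y | G' * t < g y} := by
    intro t ht
    rcases eq_or_ne (volume {y | G' * t < g y}) 0 with h0' | h0'
    · exfalso
      have hae : ∀ᵐ y, g y ≤ G' * t := by
        rw [ae_iff]
        convert h0' using 2
        ext y; simp [not_le]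
      have : G ≤ ENNReal.ofReal (G' * t) :=
        essSup_le_of_ae_le _ (hae.mono fun y hy => ENNReal.ofReal_le_ofReal hy)
      rw [hGeq, ENNReal.ofReal_le_ofReal_iff (mul_nonneg hG'pos.le ht.1.le)] at this
      nlinarith [ht.1, ht.2]
    · exact h0'.bot_lt
  -- layer cake
  have hXlc : X = ∫⁻ t in Ioi (0:ℝ), volume {x | t < f x} :=
    lintegral_eq_lintegral_meas_lt volume (ae_of_all _ f0) mf.aemeasurable
  have hYlc : Y = ∫⁻ t in Ioi (0:ℝ), volume {y | t < g y} :=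
    lintegral_eq_lintegral_meas_lt volume (ae_of_all _ g0) mg.aemeasurable
  have hZlc : Zh = ∫⁻ t in Ioi (0:ℝ), volume {z | t ≤ h z} :=
    lintegral_eq_lintegral_meas_le volume (ae_of_all _ h0) mh.aemeasurable
  -- measurability of level-measure functions
  have mkf : Measurable fun t : ℝ => volume {x | t < f x} :=
    Antitone.measurable fun s t hst => measure_mono fun x hx => lt_of_le_of_lt hst hx
  have mkg : Measurable fun t : ℝ => volume {y | t < g y} :=
    Antitone.measurable fun s t hst => measure_mono fun y hy => lt_of_le_of_lt hst hy
  have mkh : Measurable fun t : ℝ => volume {z | t ≤ h z} :=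
    Antitone.measurable fun s t hst => measure_mono fun z hz => le_trans hst hz
  -- scaled layer cake for f and g
  set Wf := ∫⁻ t in Ioo (0:ℝ) 1, volume {x | F' * t < f x} with hWfdef
  set Wg := ∫⁻ t in Ioo (0:ℝ) 1, volume {y | G' * t < g y} with hWgdef
  have hsplit : ∀ (k : ℝ → ℝ≥0∞), Measurable k → (∀ t : ℝ, 1 ≤ t → k t = 0) →
      ∫⁻ t in Ioi (0:ℝ), k t = ∫⁻ t in Ioo (0:ℝ) 1, k t := by
    intro k mk hk
    have : Ioi (0:ℝ) = Ioo 0 1 ∪ Ici 1 := by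
      ext t
      simp only [mem_Ioi, mem_union, mem_Ioo, mem_Ici]
      constructor
      · intro ht
        rcases lt_or_ge t 1 with h | h
        · exact Or.inl ⟨ht, h⟩
        · exact Or.inr h
      · rintro (⟨h1, _⟩ | h1) <;> linarith
    rw [this, lintegral_union measurableSet_Ici (by
      rw [disjoint_iff_inter_eq_empty]
      ext t
      simp only [mem_inter_iff, mem_Ioo, mem_Ici, mem_empty_iff_false, iff_false]
      rintro ⟨⟨_, h2⟩, h3⟩
      linarith)]
    have hzero : ∫⁻ t in Ici (1:ℝ), k t = 0 := by
      rw [lintegral_eq_zero_iff mk]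
      rw [Filter.EventuallyEq, ae_restrict_iff' measurableSet_Ici]
      exact ae_of_all _ fun t ht => hk t ht
    rw [hzero, add_zero]
  have mkft : Measurable fun t : ℝ => volume {x | F' * t < f x} :=
    mkf.comp (measurable_const_mul F')
  have mkgt : Measurable fun t : ℝ => volume {y | G' * t < g y} :=
    mkg.comp (measurable_const_mul G')
  have hXsc : X = ENNReal.ofReal F' * Wf := by
    rw [hXlc, lintegral_Ioi_scale hF'pos mkf, hWfdef]
    congr 1
    exact hsplit _ mkft fun t ht => hfvan _ (by nlinarith)
  have hYsc : Y = ENNReal.ofReal G' * Wg := by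
    rw [hYlc, lintegral_Ioi_scale hG'pos mkg, hWgdef]
    congr 1
    exact hsplit _ mkgt fun t ht => hgvan _ (by nlinarith)
  -- the constant c
  set c := Real.sqrt (F' * G') with hcdef
  have hcpos : 0 < c := Real.sqrt_pos.mpr (by positivity)
  have hcsq : c ^ 2 = F' * G' := Real.sq_sqrt (by positivity)
  -- main pointwise bound on level sets
  have hmain : ∀ t ∈ Ioo (0:ℝ) 1,
      volume {x | F' * t < f x} / 2 + volume {y | G' * t < g y} / 2
        ≤ volume {z | c * t ≤ h z} := by
    intro t ht
    refine midpoint_measure (measurableSet_lt measurable_const mf)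
      (measurableSet_lt measurable_const mg)
      (nonempty_of_measure_ne_zero (hfpos t ht).ne')
      (nonempty_of_measure_ne_zero (hgpos t ht).ne') ?_
    intro x hx y hy
    simp only [mem_setOf_eq] at hx hy ⊢
    have h1 : c * t = Real.sqrt ((F' * t) * (G' * t)) := by
      rw [show (F' * t) * (G' * t) = (F' * G') * t ^ 2 by ring,
        Real.sqrt_mul (by positivity), Real.sqrt_sq ht.1.le]
    have h2 : Real.sqrt ((F' * t) * (G' * t)) ≤ Real.sqrt (f x * g y) := by
      apply Real.sqrt_le_sqrt
      have := mul_le_mul hx.le hy.le (mul_nonneg hG'pos.le ht.1.le) (f0 x)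
      linarith
    rw [h1]
    exact le_trans h2 (H x y)
  -- lower bound for Zh
  have mkht : Measurable fun t : ℝ => volume {z | c * t ≤ h z} :=
    mkh.comp (measurable_const_mul c)
  have hadd : (∫⁻ t in Ioo (0:ℝ) 1,
      (volume {x | F' * t < f x} / 2 + volume {y | G' * t < g y} / 2)) = Wf / 2 + Wg / 2 := by
    rw [lintegral_add_left (mkft.div_const 2), hWfdef, hWgdef]
    simp_rw [ENNReal.div_eq_inv_mul]
    rw [lintegral_const_mul' _ _ (by simp : (2:ℝ≥0∞)⁻¹ ≠ ⊤),
        lintegral_const_mul' _ _ (by simp : (2:ℝ≥0∞)⁻¹ ≠ ⊤)]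
  have hZge : ENNReal.ofReal c * (Wf / 2 + Wg / 2) ≤ Zh := by
    rw [hZlc, lintegral_Ioi_scale hcpos mkh]
    refine mul_le_mul_right ?_ _
    rw [← hadd]
    calc ∫⁻ t in Ioo (0:ℝ) 1, (volume {x | F' * t < f x} / 2 + volume {y | G' * t < g y} / 2)
        ≤ ∫⁻ t in Ioo (0:ℝ) 1, volume {z | c * t ≤ h z} := by
          refine lintegral_mono_ae ?_
          rw [ae_restrict_iff' measurableSet_Ioo]
          exact ae_of_all _ hmain
      _ ≤ ∫⁻ t in Ioi (0:ℝ), volume {z | c * t ≤ h z} :=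
          lintegral_mono_set (fun t ht => ht.1)
  -- conclude
  have hc2 : (ENNReal.ofReal c) ^ 2 = ENNReal.ofReal F' * ENNReal.ofReal G' := by
    rw [← ENNReal.ofReal_pow hcpos.le, hcsq, ENNReal.ofReal_mul hF'pos.le]
  have h2f : Wf = Wf / 2 * 2 := (ENNReal.div_mul_cancel two_ne_zero ENNReal.ofNat_ne_top).symm
  have h2g : Wg = Wg / 2 * 2 := (ENNReal.div_mul_cancel two_ne_zero ENNReal.ofNat_ne_top).symm
  have hWW : Wf * Wg = 4 * (Wf / 2 * (Wg / 2)) := by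
    conv_lhs => rw [h2f, h2g]
    ring
  calc X * Y = (ENNReal.ofReal c) ^ 2 * (Wf * Wg) := by
        rw [hXsc, hYsc, hc2]; ring
    _ = (ENNReal.ofReal c) ^ 2 * (4 * (Wf / 2 * (Wg / 2))) := by rw [hWW]
    _ ≤ (ENNReal.ofReal c) ^ 2 * ((Wf / 2 + Wg / 2) ^ 2) :=
        mul_le_mul_right (ennreal_four_mul_le_sq _ _) _
    _ = (ENNReal.ofReal c * (Wf / 2 + Wg / 2)) ^ 2 := by rw [mul_pow]
    _ ≤ Zh ^ 2 := pow_le_pow_left' hZge 2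

structure GoodFun {E : Type*} [NormedAddCommGroup E] [MeasurableSpace E] (φ : E → ℝ) : Prop where
  meas : Measurable φ
  nonneg : ∀ x, 0 ≤ φ x
  bdd : ∃ M : ℝ, ∀ x, φ x ≤ M
  supp : ∃ R : ℝ, ∀ x, φ x ≠ 0 → ‖x‖ ≤ R

lemma GoodFun.integrable {E : Type*} [NormedAddCommGroup E] [MeasureSpace E]
    [OpensMeasurableSpace E] [ProperSpace E]
    [IsFiniteMeasureOnCompacts (volume : Measure E)]
    {φ : E → ℝ} (hφ : GoodFun φ) : Integrable φ := by
  obtain ⟨M, hM⟩ := hφ.bdd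
  obtain ⟨R, hR⟩ := hφ.supp
  have hcb : IntegrableOn φ (Metric.closedBall (0:E) R) := by
    refine Measure.integrableOn_of_bounded (M := max M 0) ?_ hφ.meas.aestronglyMeasurable ?_
    · exact ((isCompact_closedBall _ _).measure_lt_top).ne
    · refine ae_of_all _ fun x => ?_
      rw [Real.norm_eq_abs, abs_of_nonneg (hφ.nonneg x)]
      exact le_max_of_le_left (hM x)
  refine hcb.integrable_of_forall_notMem_eq_zero fun x hx => ?_
  by_contra hne
  exact hx (Metric.mem_closedBall.mpr (by simpa [dist_zero_right] using hR x hne))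

theorem pl_pi : ∀ (d : ℕ) (f g h : (Fin d → ℝ) → ℝ), GoodFun f → GoodFun g → GoodFun h →
    (∀ x y, Real.sqrt (f x * g y) ≤ h ((x + y) / 2)) →
    Real.sqrt ((∫ x, f x) * (∫ y, g y)) ≤ ∫ z, h z := by
  intro d
  induction d with
  | zero =>
    intro f g h _ _ _ H
    have hfx : f = fun _ => f default := funext fun x => by rw [Subsingleton.elim x default]
    have hgx : g = fun _ => g default := funext fun x => by rw [Subsingleton.elim x default]
    have hhx : h = fun _ => h default := funext fun x => by rw [Subsingleton.elim x default]
    rw [hfx, hgx, hhx, integral_const, integral_const, integral_const]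
    have hvol : (volume : Measure (Fin 0 → ℝ)) univ = 1 := by
      simp [volume_pi, Measure.pi_univ]
    rw [Measure.real, hvol]
    simp only [ENNReal.toReal_one, one_smul]
    have := H default default
    have hd : ((default : Fin 0 → ℝ) + default) / 2 = default := Subsingleton.elim _ _
    rwa [hd] at this
  | succ d IH =>
    intro f g h hf hg hh H
    obtain ⟨Mf, hMf⟩ := hf.bdd
    obtain ⟨Rf, hRf⟩ := hf.supp
    obtain ⟨Mg, hMg⟩ := hg.bdd
    obtain ⟨Rg, hRg⟩ := hg.supp
    obtain ⟨Mh, hMh⟩ := hh.bdd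
    obtain ⟨Rh, hRh⟩ := hh.supp
    set E := (Fin d → ℝ) with hEdef
    set e := MeasurableEquiv.piFinSuccAbove (fun _ : Fin (d+1) => ℝ) 0 with hedef
    have hmp : MeasurePreserving e :=
      volume_preserving_piFinSuccAbove (fun _ : Fin (d+1) => ℝ) 0
    have he_apply : ∀ x : Fin (d+1) → ℝ, e x = (x 0, fun j => x (Fin.succAbove 0 j)) :=
      fun x => rfl
    have he_mid : ∀ x y : Fin (d+1) → ℝ, e ((x + y) / 2) = (e x + e y) / 2 := by
      intro x y
      rw [he_apply, he_apply, he_apply]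
      apply Prod.ext
      · simp
      · funext j
        simp
    have he_symm_mid : ∀ z w : ℝ × E, e.symm ((z + w) / 2) = (e.symm z + e.symm w) / 2 := by
      intro z w
      have h1 := he_mid (e.symm z) (e.symm w)
      rw [e.apply_symm_apply, e.apply_symm_apply] at h1
      calc e.symm ((z + w) / 2) = e.symm (e ((e.symm z + e.symm w) / 2)) := by rw [h1]
        _ = (e.symm z + e.symm w) / 2 := e.symm_apply_apply _
    have he_norm : ∀ x : Fin (d+1) → ℝ, ‖e x‖ ≤ ‖x‖ := by
      intro x
      rw [he_apply, Prod.norm_def]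
      refine max_le (norm_le_pi_norm x 0) ?_
      refine pi_norm_le_iff_of_nonneg (norm_nonneg x) |>.mpr fun j => norm_le_pi_norm x _
    set f' : ℝ × E → ℝ := fun z => f (e.symm z) with hf'def
    set g' : ℝ × E → ℝ := fun z => g (e.symm z) with hg'def
    set h' : ℝ × E → ℝ := fun z => h (e.symm z) with hh'def
    have hnormz : ∀ (φ : (Fin (d+1) → ℝ) → ℝ) (R : ℝ), (∀ x, φ x ≠ 0 → ‖x‖ ≤ R) →
        ∀ z : ℝ × E, φ (e.symm z) ≠ 0 → ‖z‖ ≤ R := by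
      intro φ R hφ z hz
      calc ‖z‖ = ‖e (e.symm z)‖ := by rw [e.apply_symm_apply]
        _ ≤ ‖e.symm z‖ := he_norm _
        _ ≤ R := hφ _ hz
    have hf' : GoodFun f' :=
      ⟨hf.meas.comp e.symm.measurable, fun z => hf.nonneg _, ⟨Mf, fun z => hMf _⟩,
        ⟨Rf, hnormz f Rf hRf⟩⟩
    have hg' : GoodFun g' :=
      ⟨hg.meas.comp e.symm.measurable, fun z => hg.nonneg _, ⟨Mg, fun z => hMg _⟩,
        ⟨Rg, hnormz g Rg hRg⟩⟩
    have hh' : GoodFun h' :=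
      ⟨hh.meas.comp e.symm.measurable, fun z => hh.nonneg _, ⟨Mh, fun z => hMh _⟩,
        ⟨Rh, hnormz h Rh hRh⟩⟩
    -- slices are good
    have hslice : ∀ (φ' : ℝ × E → ℝ), GoodFun φ' → ∀ y : E, GoodFun (fun t : ℝ => φ' (t, y)) := by
      intro φ' hφ' y
      obtain ⟨M, hM⟩ := hφ'.bdd
      obtain ⟨R, hR⟩ := hφ'.supp
      refine ⟨hφ'.meas.comp (measurable_id.prodMk measurable_const), fun t => hφ'.nonneg _,
        ⟨M, fun t => hM _⟩, ⟨R, fun t ht => ?_⟩⟩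
      calc ‖t‖ = ‖((t, y) : ℝ × E).1‖ := rfl
        _ ≤ ‖((t, y) : ℝ × E)‖ := norm_fst_le _
        _ ≤ R := hR _ ht
    -- marginals are good
    have hmarg : ∀ (φ' : ℝ × E → ℝ), GoodFun φ' → GoodFun (fun y : E => ∫ t : ℝ, φ' (t, y)) := by
      intro φ' hφ'
      obtain ⟨M, hM⟩ := hφ'.bdd
      obtain ⟨R, hR⟩ := hφ'.supp
      refine ⟨(hφ'.meas.stronglyMeasurable.integral_prod_left').measurable,
        fun y => integral_nonneg fun t => hφ'.nonneg _, ?_, ⟨R, ?_⟩⟩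
      · refine ⟨(volume (Icc (-R) R)).toReal • max M 0, fun y => ?_⟩
        have hind : Integrable ((Icc (-R) R).indicator (fun _ : ℝ => max M 0)) := by
          refine (integrable_indicator_iff measurableSet_Icc).mpr ?_
          exact (integrableOn_const_iff).mpr (Or.inr measure_Icc_lt_top)
        calc ∫ t : ℝ, φ' (t, y) ≤ ∫ t : ℝ, (Icc (-R) R).indicator (fun _ => max M 0) t := by
              refine integral_mono ((hslice φ' hφ' y).integrable) hind fun t => ?_
              by_cases ht : t ∈ Icc (-R) R
              · rw [indicator_of_mem ht]
                exact le_max_of_le_left (hM _)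
              · rw [indicator_of_notMem ht]
                rcases eq_or_ne (φ' (t, y)) 0 with h0 | h0
                · rw [h0]
                · exfalso
                  apply ht
                  have : ‖t‖ ≤ R := le_trans (norm_fst_le ((t, y) : ℝ × E)) (hR _ h0)
                  rw [Real.norm_eq_abs, abs_le] at this
                  exact ⟨this.1, this.2⟩
          _ = (volume (Icc (-R) R)).toReal • max M 0 := by
              rw [integral_indicator_const _ measurableSet_Icc]; rfl
      · intro y hy
        have : ∃ t : ℝ, φ' (t, y) ≠ 0 := by
          by_contra hall
          push_neg at hall
          apply hy
          simp only [hall, integral_zero]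
        obtain ⟨t, ht⟩ := this
        calc ‖y‖ = ‖((t, y) : ℝ × E).2‖ := rfl
          _ ≤ ‖((t, y) : ℝ × E)‖ := norm_snd_le _
          _ ≤ R := hR _ ht
    set F : E → ℝ := fun y => ∫ t : ℝ, f' (t, y) with hFdef
    set G : E → ℝ := fun y => ∫ t : ℝ, g' (t, y) with hGdef
    set H' : E → ℝ := fun y => ∫ t : ℝ, h' (t, y) with hH'def
    -- Fubini
    have hfub : ∀ (φ : (Fin (d+1) → ℝ) → ℝ) (φ' : ℝ × E → ℝ), φ' = (fun z => φ (e.symm z)) →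
        GoodFun φ' → ∫ x, φ x = ∫ y : E, ∫ t : ℝ, φ' (t, y) := by
      intro φ φ' hdefeq hφ'
      have h1 : ∫ x, φ x = ∫ z, φ' z := by
        rw [← hmp.integral_comp e.measurableEmbedding φ']
        congr 1
        funext x
        simp only [hdefeq, e.symm_apply_apply]
      rw [h1]
      exact integral_prod_symm φ' hφ'.integrable
    -- hypothesis for marginals
    have Hmarg : ∀ y₁ y₂ : E, Real.sqrt (F y₁ * G y₂) ≤ H' ((y₁ + y₂) / 2) := by
      intro y₁ y₂
      obtain ⟨Mfs, hMfs⟩ := (hslice f' hf' y₁).bdd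
      obtain ⟨Mgs, hMgs⟩ := (hslice g' hg' y₂).bdd
      refine dim1_PL (hslice f' hf' y₁).meas (hslice g' hg' y₂).meas
        (hslice h' hh' ((y₁ + y₂)/2)).meas (fun t => (hslice f' hf' y₁).nonneg t)
        (fun t => (hslice g' hg' y₂).nonneg t) (fun t => (hslice h' hh' _).nonneg t)
        hMfs hMgs (hslice f' hf' y₁).integrable (hslice g' hg' y₂).integrable
        (hslice h' hh' _).integrable ?_
      intro t₁ t₂
      have h1 := H (e.symm (t₁, y₁)) (e.symm (t₂, y₂))
      have h2 : ((t₁, y₁) + (t₂, y₂) : ℝ × E) / 2 = ((t₁ + t₂) / 2, (y₁ + y₂) / 2) := rfl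
      have h3 : (e.symm (t₁, y₁) + e.symm (t₂, y₂)) / 2
          = e.symm (((t₁ + t₂) / 2, (y₁ + y₂) / 2)) := by
        rw [← he_symm_mid, h2]
      rw [h3] at h1
      exact h1
    rw [hfub f f' hf'def hf', hfub g g' hg'def hg', hfub h h' hh'def hh']
    exact IH F G H' (hmarg f' hf') (hmarg g' hg') (hmarg h' hh') Hmarg

lemma goodFun_indicator_exp {d : ℕ} (i : Fin d) (c : ℝ) (S : Set (Fin d → ℝ))
    (hS : IsCompact S) :
    GoodFun (S.indicator fun x => Real.exp (-(c * x i))) := by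
  obtain ⟨R, hR⟩ := hS.isBounded.subset_closedBall 0
  have hnorm : ∀ x ∈ S, |x i| ≤ max R 0 := by
    intro x hx
    have h1 : ‖x‖ ≤ R := by simpa [dist_zero_right] using hR hx
    exact le_trans (norm_le_pi_norm x i) (le_max_of_le_left h1)
  refine ⟨Measurable.indicator ?_ hS.isClosed.measurableSet,
    fun x => indicator_nonneg (fun x _ => (Real.exp_pos _).le) x,
    ⟨Real.exp (|c| * max R 0), fun x => ?_⟩, ⟨max R 0, fun x hx => ?_⟩⟩
  · exact (by fun_prop : Measurable fun x : Fin d → ℝ => -(c * x i)).exp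
  · by_cases hx : x ∈ S
    · rw [indicator_of_mem hx]
      apply Real.exp_le_exp.mpr
      have h2 : |c * x i| ≤ |c| * max R 0 := by
        rw [abs_mul]
        exact mul_le_mul_of_nonneg_left (hnorm x hx) (abs_nonneg c)
      have := neg_abs_le (c * x i)
      linarith
    · rw [indicator_of_notMem hx]
      exact (Real.exp_pos _).le
  · have hmem : x ∈ S := by
      by_contra hmem
      exact hx (indicator_of_notMem hmem _)
    have h1 : ‖x‖ ≤ R := by simpa [dist_zero_right] using hR hmem
    exact le_max_of_le_left h1

lemma integral_exp_pos {d : ℕ} (i : Fin d) (c : ℝ) {K : Set (Fin d → ℝ)}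
    (hK : IsCompact K) (hKi : (interior K).Nonempty) :
    0 < ∫ x in K, Real.exp (-(c * x i)) := by
  obtain ⟨R, hR⟩ := hK.isBounded.subset_closedBall 0
  set ε := Real.exp (-(|c| * max R 0)) with hεdef
  have hεpos : 0 < ε := Real.exp_pos _
  have hKvol : 0 < (volume K).toReal :=
    ENNReal.toReal_pos (Measure.measure_pos_of_nonempty_interior _ hKi).ne' hK.measure_lt_top.ne
  have hcont : Continuous fun x : Fin d → ℝ => Real.exp (-(c * x i)) :=
    Real.continuous_exp.comp (continuous_const.mul (continuous_apply i)).neg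
  have hint : IntegrableOn (fun x => Real.exp (-(c * x i))) K :=
    hcont.continuousOn.integrableOn_compact hK
  have hbound : ∀ x ∈ K, ε ≤ Real.exp (-(c * x i)) := by
    intro x hx
    apply Real.exp_le_exp.mpr
    have h1 : ‖x‖ ≤ R := by simpa [dist_zero_right] using hR hx
    have h2 : |c * x i| ≤ |c| * max R 0 := by
      rw [abs_mul]
      exact mul_le_mul_of_nonneg_left
        (le_trans (norm_le_pi_norm x i) (le_max_of_le_left h1)) (abs_nonneg c)
    have := le_abs_self (c * x i)
    linarith
  calc (0:ℝ) < (volume K).toReal * ε := by positivity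
    _ = ∫ _ in K, ε := by rw [setIntegral_const, smul_eq_mul]; rfl
    _ ≤ ∫ x in K, Real.exp (-(c * x i)) :=
        setIntegral_mono_on ((integrableOn_const_iff).mpr (Or.inr hK.measure_lt_top)) hint
          hK.measurableSet hbound



lemma numeric_bound {n : ℕ} (hn : 2 ≤ n) {a b : ℝ} (ha : 0 < a)
    (hb : b = (1 - 1 / Real.sqrt n) * a) :
    0 < b ∧ (((a + b) / 2) ^ 2 / (a * b)) ^ (n + 1) < 9 := by
  have hn0 : (0:ℝ) ≤ n := Nat.cast_nonneg n
  set u := Real.sqrt n with hudef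
  have hu2 : u ^ 2 = n := Real.sq_sqrt hn0
  have hsqrt2 : Real.sqrt 2 ≤ u := Real.sqrt_le_sqrt (by exact_mod_cast hn)
  have h141 : (1.41 : ℝ) ≤ Real.sqrt 2 := by
    rw [Real.le_sqrt (by norm_num) (by norm_num)]
    norm_num
  have hu141 : (1.41 : ℝ) ≤ u := le_trans h141 hsqrt2
  have hu1 : 1 < u := by linarith
  have hu0 : 0 < u := by linarith
  have hu0' : u ≠ 0 := ne_of_gt hu0
  set s : ℝ := 1 / u with hsdef
  have hsu : s * u = 1 := by
    rw [hsdef]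
    field_simp
  have hs0 : 0 < s := by rw [hsdef]; positivity
  have hs1 : s < 1 := by
    rw [hsdef, div_lt_one hu0]
    exact hu1
  have h1s : (0:ℝ) < 1 - s := by linarith
  have hbpos : 0 < b := by
    rw [hb]
    exact mul_pos h1s ha
  refine ⟨hbpos, ?_⟩
  set q := ((a + b) / 2) ^ 2 / (a * b) with hqdef
  have habpos : 0 < a * b := mul_pos ha hbpos
  have h4pos : (0:ℝ) < 4 * (1 - s) := by linarith
  have hq : q = (2 - s) ^ 2 / (4 * (1 - s)) := by
    rw [hqdef, hb, div_eq_div_iff (ne_of_gt (by nlinarith : (0:ℝ) < a * ((1 - s) * a))) (ne_of_gt h4pos)]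
    ring
  have hq1mul : (q - 1) * (4 * (1 - s)) = s ^ 2 := by
    have hqD : q * (4 * (1 - s)) = (2 - s) ^ 2 := by
      rw [hq, div_mul_cancel₀ _ (ne_of_gt h4pos)]
    linear_combination hqD
  have hq1nonneg : 0 ≤ q - 1 := by
    have hs2 : 0 ≤ s ^ 2 := sq_nonneg s
    nlinarith
  have hkey : u ^ 2 + 1 ≤ 8 * u ^ 2 - 8 * u := by
    nlinarith [mul_le_mul_of_nonneg_right hu141 hu0.le]
  have hC : ((n:ℝ) + 1) * (q - 1) ≤ 2 := by
    rw [← hu2]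
    have hmain : (u ^ 2 + 1) * s ^ 2 ≤ 8 * (1 - s) := by
      have hmul : ((u ^ 2 + 1) * s ^ 2) * u ^ 2 = u ^ 2 + 1 := by
        calc ((u ^ 2 + 1) * s ^ 2) * u ^ 2 = (u ^ 2 + 1) * (s * u) ^ 2 := by ring
          _ = u ^ 2 + 1 := by rw [hsu]; ring
      have hmul2 : (8 * (1 - s)) * u ^ 2 = 8 * u ^ 2 - 8 * u := by
        calc (8 * (1 - s)) * u ^ 2 = 8 * u ^ 2 - 8 * (s * u) * u := by ring
          _ = 8 * u ^ 2 - 8 * u := by rw [hsu]; ring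
      have h2 : ((u ^ 2 + 1) * s ^ 2) * u ^ 2 ≤ (8 * (1 - s)) * u ^ 2 := by
        rw [hmul, hmul2]; exact hkey
      exact le_of_mul_le_mul_right h2 (by positivity)
    have h3 : ((u ^ 2 + 1) * (q - 1)) * (4 * (1 - s)) ≤ 2 * (4 * (1 - s)) := by
      calc ((u ^ 2 + 1) * (q - 1)) * (4 * (1 - s)) = (u ^ 2 + 1) * ((q - 1) * (4 * (1 - s))) := by
            ring
        _ = (u ^ 2 + 1) * s ^ 2 := by rw [hq1mul]
        _ ≤ 8 * (1 - s) := hmain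
        _ = 2 * (4 * (1 - s)) := by ring
    exact le_of_mul_le_mul_right h3 h4pos
  have hqle : q ≤ Real.exp (q - 1) := by
    have := Real.add_one_le_exp (q - 1)
    linarith
  have hpow : q ^ (n + 1) ≤ Real.exp (((n:ℝ) + 1) * (q - 1)) := by
    calc q ^ (n + 1) ≤ Real.exp (q - 1) ^ (n + 1) :=
          pow_le_pow_left₀ (by linarith) hqle (n + 1)
      _ = Real.exp (((n + 1 : ℕ) : ℝ) * (q - 1)) := (Real.exp_nat_mul _ _).symm
      _ = Real.exp (((n:ℝ) + 1) * (q - 1)) := by push_cast; ring_nf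
  have hexp9 : Real.exp 2 < 9 := by
    have h1 : Real.exp 2 = Real.exp 1 * Real.exp 1 := by
      rw [← Real.exp_add]; norm_num
    nlinarith [Real.exp_one_lt_d9, Real.exp_pos 1]
  calc q ^ (n + 1) ≤ Real.exp (((n:ℝ) + 1) * (q - 1)) := hpow
    _ ≤ Real.exp 2 := Real.exp_le_exp.mpr hC
    _ < 9 := hexp9

/-- For a convex body `K' ⊆ ℝ^{n+1}`, `Z(c) := ∫_{K'} e^{-c x₀} dx` and
`π_c(x) = e^{-c x₀}/Z(c)`. If `n ≥ 2`, `a > 0` and `b = (1 - 1/√n) a`, then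
`∫_{K'} √(π_a π_b) = (∫_{K'} e^{-((a+b)/2) x₀} dx)/√(Z(a) Z(b)) > 1/3`. -/
theorem inner_product_consecutive_stationary_states
    (n : ℕ) (hn : 2 ≤ n) (K' : Set (Fin (n + 1) → ℝ))
    (hK_compact : IsCompact K') (hK_convex : Convex ℝ K')
    (hK_interior : (interior K').Nonempty)
    (Z : ℝ → ℝ) (hZ : ∀ c, Z c = ∫ x in K', Real.exp (-(c * x 0)))
    (a b : ℝ) (ha : 0 < a) (hb : b = (1 - 1 / Real.sqrt n) * a) :
    (∫ x in K', Real.sqrt ((Real.exp (-(a * x 0)) / Z a) * (Real.exp (-(b * x 0)) / Z b)))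
      = (∫ x in K', Real.exp (-(((a + b) / 2) * x 0))) / Real.sqrt (Z a * Z b) ∧
    1 / 3 < (∫ x in K', Real.exp (-(((a + b) / 2) * x 0))) / Real.sqrt (Z a * Z b) := by
  obtain ⟨hbpos, hq9⟩ := numeric_bound hn ha hb
  set m : ℝ := (a + b) / 2 with hmdef
  have hmpos : 0 < m := by rw [hmdef]; linarith
  have hZa : Z a = ∫ x in K', Real.exp (-(a * x 0)) := hZ a
  have hZb : Z b = ∫ x in K', Real.exp (-(b * x 0)) := hZ b
  have hZapos : 0 < Z a := by rw [hZa]; exact integral_exp_pos 0 a hK_compact hK_interior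
  have hZbpos : 0 < Z b := by rw [hZb]; exact integral_exp_pos 0 b hK_compact hK_interior
  set Im : ℝ := ∫ x in K', Real.exp (-(m * x 0)) with hImdef
  have hImpos : 0 < Im := integral_exp_pos 0 m hK_compact hK_interior
  have hZZpos : 0 < Real.sqrt (Z a * Z b) :=
    Real.sqrt_pos.mpr (mul_pos hZapos hZbpos)
  have sqrt_exp : ∀ t : ℝ, Real.sqrt (Real.exp t) = Real.exp (t / 2) := by
    intro t
    rw [show Real.exp t = Real.exp (t / 2) ^ 2 by rw [sq, ← Real.exp_add]; norm_num]
    exact Real.sqrt_sq (Real.exp_nonneg _)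
  constructor
  · -- Part 1
    have hfun : ∀ x : Fin (n+1) → ℝ,
        Real.sqrt ((Real.exp (-(a * x 0)) / Z a) * (Real.exp (-(b * x 0)) / Z b))
          = Real.exp (-(m * x 0)) / Real.sqrt (Z a * Z b) := by
      intro x
      rw [div_mul_div_comm, Real.sqrt_div (by positivity), ← Real.exp_add, sqrt_exp]
      congr 2
      rw [hmdef]
      ring
    simp_rw [hfun]
    rw [integral_div]
  · -- Part 2
    set α : ℝ := a / m with hαdef
    set β : ℝ := b / m with hβdef
    have hαpos : 0 < α := div_pos ha hmpos
    have hβpos : 0 < β := div_pos hbpos hmpos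
    have hαβ2 : α + β = 2 := by
      rw [hαdef, hβdef, hmdef]
      field_simp
    have hma : m * α = a := by rw [hαdef]; field_simp
    have hmb : m * β = b := by rw [hβdef]; field_simp
    set f : (Fin (n+1) → ℝ) → ℝ := (α • K').indicator (fun x => Real.exp (-(m * x 0))) with hfdef
    set g : (Fin (n+1) → ℝ) → ℝ := (β • K').indicator (fun x => Real.exp (-(m * x 0))) with hgdef
    set h : (Fin (n+1) → ℝ) → ℝ := K'.indicator (fun x => Real.exp (-(m * x 0))) with hhdef
    have hcptα : IsCompact (α • K') := by
      rw [← Set.image_smul]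
      exact hK_compact.image (continuous_const_smul α)
    have hcptβ : IsCompact (β • K') := by
      rw [← Set.image_smul]
      exact hK_compact.image (continuous_const_smul β)
    have hgoodf : GoodFun f := goodFun_indicator_exp 0 m _ hcptα
    have hgoodg : GoodFun g := goodFun_indicator_exp 0 m _ hcptβ
    have hgoodh : GoodFun h := goodFun_indicator_exp 0 m _ hK_compact
    -- hypothesis of PL
    have hhyp : ∀ x y : Fin (n+1) → ℝ, Real.sqrt (f x * g y) ≤ h ((x + y) / 2) := by
      intro x y
      by_cases hx : x ∈ α • K'
      · by_cases hy : y ∈ β • K'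
        · have hmid : (x + y) / 2 ∈ K' := by
            obtain ⟨k₁, hk₁, rfl⟩ := hx
            obtain ⟨k₂, hk₂, rfl⟩ := hy
            have heq : (α • k₁ + β • k₂) / 2 = (α / 2) • k₁ + (β / 2) • k₂ := by
              funext j
              simp only [Pi.div_apply, Pi.add_apply, Pi.smul_apply, smul_eq_mul]
              norm_num
              ring
            rw [heq]
            exact hK_convex hk₁ hk₂ (by linarith) (by linarith) (by linarith)
          rw [hfdef, hgdef, hhdef, indicator_of_mem hx, indicator_of_mem hy,
            indicator_of_mem hmid, ← Real.exp_add, sqrt_exp]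
          apply le_of_eq
          congr 1
          have h0 : ((x + y) / 2) 0 = (x 0 + y 0) / 2 := by
            simp only [Pi.div_apply, Pi.add_apply]
            norm_num
          rw [h0]
          ring
        · rw [hgdef, indicator_of_notMem hy, mul_zero, Real.sqrt_zero]
          exact indicator_nonneg (fun z _ => (Real.exp_pos _).le) _
      · rw [hfdef, indicator_of_notMem hx, zero_mul, Real.sqrt_zero]
        exact indicator_nonneg (fun z _ => (Real.exp_pos _).le) _
    have hPL := pl_pi (n+1) f g h hgoodf hgoodg hgoodh hhyp
    -- compute ∫ h
    have hinth : ∫ z, h z = Im := by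
      rw [hhdef, integral_indicator hK_compact.measurableSet, hImdef]
    -- change of variables
    have hcv : ∀ (c γ : ℝ), 0 < γ → m * γ = c →
        (∫ z, ((γ • K').indicator (fun x => Real.exp (-(m * x 0)))) z)
          = γ ^ (n+1) * (∫ x in K', Real.exp (-(c * x 0))) := by
      intro c γ hγ hmc
      have hγ' : γ ≠ 0 := ne_of_gt hγ
      have hfr := MeasureTheory.Measure.integral_comp_smul (μ := (volume : Measure (Fin (n+1) → ℝ)))
        ((γ • K').indicator (fun x => Real.exp (-(m * x 0)))) γ
      rw [Module.finrank_fin_fun] at hfr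
      have hcomp : ∀ x : Fin (n+1) → ℝ,
          ((γ • K').indicator (fun x => Real.exp (-(m * x 0)))) (γ • x)
            = K'.indicator (fun x => Real.exp (-(c * x 0))) x := by
        intro x
        by_cases hx : x ∈ K'
        · rw [indicator_of_mem (smul_mem_smul_set hx), indicator_of_mem hx]
          congr 1
          have : (γ • x) 0 = γ * x 0 := rfl
          rw [this, ← hmc]
          ring
        · rw [indicator_of_notMem, indicator_of_notMem hx]
          exact fun hmem => hx ((smul_mem_smul_set_iff₀ hγ' _ _).mp hmem)
      simp_rw [hcomp] at hfr
      rw [integral_indicator hK_compact.measurableSet] at hfr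
      rw [abs_of_pos (by positivity : (0:ℝ) < (γ ^ (n+1))⁻¹), smul_eq_mul] at hfr
      rw [hfr]
      field_simp
    have hSa : ∫ z, f z = α ^ (n+1) * Z a := by
      rw [hfdef, hcv a α hαpos hma, hZa]
    have hSb : ∫ z, g z = β ^ (n+1) * Z b := by
      rw [hgdef, hcv b β hβpos hmb, hZb]
    rw [hSa, hSb, hinth] at hPL
    -- now hPL : √(α^(n+1) * Z a * (β^(n+1) * Z b)) ≤ Im
    have hre : α ^ (n+1) * Z a * (β ^ (n+1) * Z b) = (α * β) ^ (n+1) * (Z a * Z b) := by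
      rw [mul_pow]
      ring
    rw [hre, Real.sqrt_mul (by positivity)] at hPL
    -- numeric part : 1/3 < √((α*β)^(n+1))
    have hP9 : (1:ℝ) / 9 < (α * β) ^ (n+1) := by
      have hαβq : α * β = ((a * b) / m ^ 2) := by
        rw [hαdef, hβdef]
        field_simp
      have hqpos : 0 < m ^ 2 / (a * b) := by positivity
      have hqinv : (α * β) ^ (n+1) = 1 / (m ^ 2 / (a * b)) ^ (n+1) := by
        rw [hαβq]
        rw [one_div, ← inv_pow]
        congr 1
        field_simp
      rw [hqinv]
      rw [div_lt_div_iff₀ (by norm_num) (by positivity)]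
      calc 1 * (m ^ 2 / (a * b)) ^ (n+1) = (m ^ 2 / (a * b)) ^ (n+1) := one_mul _
        _ < 9 := hq9
        _ = 1 * 9 := (one_mul 9).symm
    have hsqrtP : 1 / 3 < Real.sqrt ((α * β) ^ (n+1)) := by
      rw [show (1:ℝ)/3 = Real.sqrt (1/9) by
        rw [show (1:ℝ)/9 = (1/3)^2 by norm_num,
          Real.sqrt_sq (by norm_num : (0:ℝ) ≤ 1/3)]]
      exact Real.sqrt_lt_sqrt (by norm_num : (0:ℝ) ≤ 1/9) hP9
    rw [lt_div_iff₀ hZZpos]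
    calc 1 / 3 * Real.sqrt (Z a * Z b)
        < Real.sqrt ((α * β) ^ (n+1)) * Real.sqrt (Z a * Z b) :=
          mul_lt_mul_of_pos_right hsqrtP hZZpos
      _ ≤ Im := hPL
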